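/- Let α be a real number with 1/2 < α < 1/√2. Then the function x ↦ α·x^{α−1} (the derivative of F(x) = x^α) is square-integrable on the interval (0,1), but the function x ↦ α²·x^{α²−1} (the derivative of F∘F, i.e. of x ↦ x^{α²}) is not square-integrable on (0,1). In other words, ∫₀¹ x^{2α−2} dx < ∞ while ∫₀¹ x^{2α²−2} dx = ∞. -/

import Mathlib

open MeasureTheory

/-- For `1/2 < α < 1/√2`, the derivative `x ↦ α·x^{α-1}` of `F(x) = x^α` is
square-integrable on `(0,1)`, but the derivative `x ↦ α²·x^{α²-1}` of `F∘F` is not. -/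
theorem sobolev_homeo_not_group (α : ℝ) (h1 : 1 / 2 < α) (h2 : α < 1 / Real.sqrt 2) :
    IntegrableOn (fun x : ℝ => (α * x ^ (α - 1)) ^ 2) (Set.Ioo 0 1) ∧
    ¬ IntegrableOn (fun x : ℝ => (α ^ 2 * x ^ (α ^ 2 - 1)) ^ 2) (Set.Ioo 0 1) := by
  have hα0 : 0 < α := by linarith
  have hsq : α ^ 2 < 1 / 2 := by
    have h2' : α * α < (1 / Real.sqrt 2) * (1 / Real.sqrt 2) :=
      mul_self_lt_mul_self hα0.le h2
    have : (1 / Real.sqrt 2) * (1 / Real.sqrt 2) = 1 / 2 := by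
      rw [div_mul_div_comm, one_mul, Real.mul_self_sqrt (by norm_num)]
    nlinarith [this, h2']
  constructor
  · have hint : IntegrableOn (fun x : ℝ => α ^ 2 * x ^ ((α - 1) + (α - 1)))
        (Set.Ioo 0 1) := by
      exact ((intervalIntegral.integrableOn_Ioo_rpow_iff one_pos).2
        (by linarith)).const_mul _
    refine hint.congr_fun (fun x hx => ?_) measurableSet_Ioo
    beta_reduce; rw [Real.rpow_add hx.1, mul_pow, sq]; ring
  · intro h
    have h' : IntegrableOn (fun x : ℝ => x ^ ((α ^ 2 - 1) + (α ^ 2 - 1)))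
        (Set.Ioo 0 1) := by
      have hne : (α ^ 2) ^ 2 ≠ 0 := by positivity
      have this : IntegrableOn (fun x : ℝ => ((α ^ 2) ^ 2)⁻¹ * (α ^ 2 * x ^ (α ^ 2 - 1)) ^ 2) (Set.Ioo 0 1) := h.const_mul ((α ^ 2) ^ 2)⁻¹
      refine this.congr_fun (fun x hx => ?_) measurableSet_Ioo
      rw [Real.rpow_add hx.1]
      field_simp [mul_pow, sq]
    rw [intervalIntegral.integrableOn_Ioo_rpow_iff one_pos] at h'
    linarith
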